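/- arXiv:2204.03275 — 7 statements merged into one kernel-verified Lean document; each statement's English description precedes it below -/
import Mathlib

section
/- Let k ≥ 1 be a real number. For every real s with s ≥ k, one has g_k(s) ≥ k·(log k − 1) + (s − k)²/(2k). -/
open Real intervalIntegral MeasureTheory Set
open scoped Interval

/-- Truncation `T_k(s) = max(0, min(k, s))`. -/
noncomputable def Tk (k s : ℝ) : ℝ := max 0 (min k s)

/-- `g_k(s) = ∫₀ˢ (∫₁ʸ dz / T_k(z)) dy`. -/
noncomputable def gk (k s : ℝ) : ℝ := ∫ y in (0:ℝ)..s, ∫ z in (1:ℝ)..y, 1 / Tk k z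

lemma Tk_eq_self {k z : ℝ} (h0 : 0 ≤ z) (hz : z ≤ k) : Tk k z = z := by
  simp [Tk, min_eq_right hz, max_eq_right h0]

lemma Tk_eq_k {k z : ℝ} (hk : 0 ≤ k) (hz : k ≤ z) : Tk k z = k := by
  simp [Tk, min_eq_left hz, max_eq_right hk]

/-- `log` is interval integrable on `[0,1]`. -/
lemma intIntLog01 : IntervalIntegrable Real.log volume (0:ℝ) 1 := by
  have hbase : IntervalIntegrable (fun x : ℝ => 2 * x ^ (-(1/2) : ℝ)) volume 0 1 :=
    (intervalIntegral.intervalIntegrable_rpow' (by norm_num)).const_mul 2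
  refine hbase.mono_fun (Real.measurable_log.aestronglyMeasurable) ?_
  filter_upwards [ae_restrict_mem measurableSet_uIoc] with x hx
  rw [Set.uIoc_of_le (by norm_num : (0:ℝ) ≤ 1)] at hx
  obtain ⟨hx0, hx1⟩ := hx
  have hsq : 0 < Real.sqrt x := Real.sqrt_pos.2 hx0
  have h1 : Real.log (1 / Real.sqrt x) ≤ 1 / Real.sqrt x - 1 :=
    Real.log_le_sub_one_of_pos (by positivity)
  have h2 : Real.log (1 / Real.sqrt x) = -(1/2) * Real.log x := by
    rw [Real.log_div one_ne_zero (ne_of_gt hsq), Real.log_one,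
      Real.log_sqrt hx0.le]
    ring
  have hlogle : Real.log x ≤ 0 := Real.log_nonpos hx0.le hx1
  have hxr : x ^ (-(1/2) : ℝ) = 1 / Real.sqrt x := by
    rw [Real.rpow_neg hx0.le, ← Real.sqrt_eq_rpow, one_div]
  rw [h2] at h1
  have hsx : 1 ≤ 1 / Real.sqrt x := by
    rw [le_div_iff₀ hsq, one_mul]
    exact Real.sqrt_le_one.2 hx1
  simp only [Real.norm_eq_abs, abs_of_nonpos hlogle, hxr,
    abs_of_nonneg (by positivity : (0:ℝ) ≤ 2 * (1 / Real.sqrt x))]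
  linarith

lemma Tk_contOn (k : ℝ) (hk : 1 ≤ k) :
    ContinuousOn (fun z => 1 / Tk k z) (Set.Ici 1) := by
  apply ContinuousOn.div continuousOn_const
    ((continuous_const.max (continuous_const.min continuous_id)).continuousOn)
  intro z hz
  have h1 : (1:ℝ) ≤ min k z := le_min hk hz
  have : (0:ℝ) < Tk k z := lt_of_lt_of_le one_pos (h1.trans (le_max_right _ _))
  exact this.ne'

lemma inner_low (k : ℝ) (hk : 1 ≤ k) {y : ℝ} (hy0 : 0 < y) (hyk : y ≤ k) :
    (∫ z in (1:ℝ)..y, 1 / Tk k z) = Real.log y := by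
  have heq : EqOn (fun z => 1 / Tk k z) (fun z => 1 / z) (uIcc 1 y) := by
    intro z hz
    rcases Set.mem_uIcc.1 hz with ⟨h1, h2⟩ | ⟨h1, h2⟩
    · simp [Tk_eq_self (by linarith) (h2.trans hyk)]
    · simp [Tk_eq_self (by linarith) (h2.trans hk)]
  rw [intervalIntegral.integral_congr heq,
    integral_one_div (notMem_uIcc_of_lt one_pos hy0), div_one]

lemma inner_high (k : ℝ) (hk : 1 ≤ k) {y : ℝ} (hy : k ≤ y) :
    (∫ z in (1:ℝ)..y, 1 / Tk k z) = Real.log k + (y - k) / k := by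
  have hk0 : (0:ℝ) < k := lt_of_lt_of_le one_pos hk
  have h1 : IntervalIntegrable (fun z => 1 / Tk k z) volume 1 k := by
    refine ((Tk_contOn k hk).mono ?_).intervalIntegrable
    rw [Set.uIcc_of_le hk]; exact Set.Icc_subset_Ici_self
  have h2 : IntervalIntegrable (fun z => 1 / Tk k z) volume k y := by
    refine ((Tk_contOn k hk).mono ?_).intervalIntegrable
    rw [Set.uIcc_of_le hy]
    exact fun z hz => hk.trans hz.1
  rw [← intervalIntegral.integral_add_adjacent_intervals h1 h2,
    inner_low k hk hk0 le_rfl]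
  congr 1
  have heq : EqOn (fun z => 1 / Tk k z) (fun _ => 1 / k) (uIcc k y) := by
    intro z hz
    rw [Set.uIcc_of_le hy] at hz
    simp [Tk_eq_k hk0.le hz.1]
  rw [intervalIntegral.integral_congr heq, intervalIntegral.integral_const,
    smul_eq_mul]
  ring

theorem stmt_1 (k : ℝ) (hk : 1 ≤ k) (s : ℝ) (hs : k ≤ s) :
    gk k s ≥ k * (Real.log k - 1) + (s - k) ^ 2 / (2 * k) := by
  have hk0 : (0:ℝ) < k := lt_of_lt_of_le one_pos hk
  set φ : ℝ → ℝ := fun y => ∫ z in (1:ℝ)..y, 1 / Tk k z with hφ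
  have hlogint : IntervalIntegrable Real.log volume 0 k :=
    intIntLog01.trans (intervalIntegrable_log (notMem_uIcc_of_lt one_pos hk0))
  have hφ1 : IntervalIntegrable φ volume 0 k := by
    rw [intervalIntegrable_iff_integrableOn_Ioc_of_le hk0.le]
    refine (((intervalIntegrable_iff_integrableOn_Ioc_of_le hk0.le).1
      hlogint)).congr_fun ?_ measurableSet_Ioc
    intro y hy
    exact (inner_low k hk hy.1 hy.2).symm
  have hφ2 : IntervalIntegrable φ volume k s := by
    refine ContinuousOn.intervalIntegrable ?_
    refine ContinuousOn.congr (f := fun y => Real.log k + (y - k) / k) ?_ ?_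
    · exact (continuous_const.add ((continuous_id.sub continuous_const).div_const k)).continuousOn
    · intro y hy
      rw [Set.uIcc_of_le hs] at hy
      exact inner_high k hk hy.1
  have hlog : (∫ y in (0:ℝ)..k, Real.log y) = k * Real.log k - k := by
    have hd : ∀ x ∈ Set.Ioo (0:ℝ) k,
        HasDerivWithinAt (fun x => x * Real.log x - x) (Real.log x) (Set.Ioi x) x := by
      intro x hx
      have h := (Real.hasDerivAt_mul_log hx.1.ne').sub (hasDerivAt_id x)
      exact (h.congr_deriv (by ring)).hasDerivWithinAt
    have := intervalIntegral.integral_eq_sub_of_hasDeriv_right_of_le hk0.le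
      ((Real.continuous_mul_log.sub continuous_id).continuousOn) hd hlogint
    simpa using this
  have e1 : (∫ y in (0:ℝ)..k, φ y) = k * Real.log k - k := by
    rw [← hlog]
    refine intervalIntegral.integral_congr_ae (Filter.Eventually.of_forall fun y hy => ?_)
    rw [Set.uIoc_of_le hk0.le] at hy
    exact inner_low k hk hy.1 hy.2
  have e2 : (∫ y in k..s, φ y) = (s - k) * Real.log k + (s - k) ^ 2 / (2 * k) := by
    have heq : EqOn φ (fun y => Real.log k + (y - k) / k) (uIcc k s) := by
      intro y hy
      rw [Set.uIcc_of_le hs] at hy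
      exact inner_high k hk hy.1
    rw [intervalIntegral.integral_congr heq]
    have hint2 : IntervalIntegrable (fun y : ℝ => (y - k) / k) volume k s :=
      (((continuous_id.sub continuous_const).div_const k)).intervalIntegrable k s
    rw [intervalIntegral.integral_add (intervalIntegrable_const) hint2,
      intervalIntegral.integral_const, intervalIntegral.integral_div]
    have : (∫ y in k..s, (y - k)) = (s - k) ^ 2 / 2 := by
      have h := intervalIntegral.integral_comp_sub_right (a := k) (b := s) (fun u => u) k
      rw [h, integral_id]
      ring
    rw [this, smul_eq_mul]
    ring
  have hsplit : gk k s = (∫ y in (0:ℝ)..k, φ y) + ∫ y in k..s, φ y := by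
    rw [gk, intervalIntegral.integral_add_adjacent_intervals hφ1 hφ2]
  rw [ge_iff_le, hsplit, e1, e2]
  have hlk : 0 ≤ Real.log k := Real.log_nonneg hk
  have hsk : 0 ≤ s - k := by linarith
  nlinarith [mul_nonneg hsk hlk]
end

section
/- Let k ≥ 1 be a real number. For every real s ≥ 0, one has 2·√(T_k(s)) ≤ h_k(s). -/
open Real intervalIntegral

/-- `h_k(s) = ∫₀ˢ dz / √(T_k(z))`. -/
noncomputable def hk (k s : ℝ) : ℝ := ∫ z in (0:ℝ)..s, 1 / Real.sqrt (Tk k z)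

lemma eqOn_aux {k a : ℝ} (ha : 0 ≤ a) (hak : a ≤ k) :
    Set.EqOn (fun z => 1 / Real.sqrt (Tk k z)) (fun z => z ^ (-(1/2) : ℝ))
      (Set.uIcc 0 a) := by
  intro z hz
  rw [Set.uIcc_of_le ha] at hz
  obtain ⟨h0, h1⟩ := hz
  have hTk : Tk k z = z := by
    simp [Tk, min_eq_right (h1.trans hak), max_eq_right h0]
  simp only [hTk, Real.sqrt_eq_rpow, one_div, ← Real.rpow_neg h0]

lemma intInt_aux {k a : ℝ} (ha : 0 ≤ a) (hak : a ≤ k) :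
    IntervalIntegrable (fun z => 1 / Real.sqrt (Tk k z)) MeasureTheory.volume 0 a := by
  refine (intervalIntegrable_rpow' (r := -(1/2)) (by norm_num)).congr_ae ?_
  refine MeasureTheory.ae_restrict_of_forall_mem measurableSet_uIoc ?_
  intro z hz
  have := eqOn_aux ha hak (Set.uIoc_subset_uIcc hz)
  exact this.symm

lemma int_aux {k a : ℝ} (ha : 0 ≤ a) (hak : a ≤ k) :
    (∫ z in (0:ℝ)..a, 1 / Real.sqrt (Tk k z)) = 2 * Real.sqrt a := by
  rw [intervalIntegral.integral_congr (eqOn_aux ha hak),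
    integral_rpow (Or.inl (by norm_num))]
  rw [Real.sqrt_eq_rpow]
  norm_num
  ring

theorem stmt_3 (k : ℝ) (hk1 : 1 ≤ k) (s : ℝ) (hs : 0 ≤ s) :
    2 * Real.sqrt (Tk k s) ≤ hk k s := by
  have hk0 : (0:ℝ) < k := lt_of_lt_of_le one_pos hk1
  rcases le_total s k with h | h
  · have : Tk k s = s := by simp [Tk, min_eq_right h, max_eq_right hs]
    rw [this, hk, int_aux hs h]
  · -- s ≥ k
    have hTks : Tk k s = k := by simp [Tk, min_eq_left h, max_eq_right hk0.le]
    have hconst : Set.EqOn (fun z => 1 / Real.sqrt (Tk k z))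
        (fun _ => 1 / Real.sqrt k) (Set.uIcc k s) := by
      intro z hz
      rw [Set.uIcc_of_le h] at hz
      have : Tk k z = k := by simp [Tk, min_eq_left hz.1, max_eq_right hk0.le]
      simp [this]
    have hint2 : IntervalIntegrable (fun z => 1 / Real.sqrt (Tk k z))
        MeasureTheory.volume k s := by
      refine (_root_.intervalIntegrable_const (c := 1 / Real.sqrt k)).congr_ae ?_
      refine MeasureTheory.ae_restrict_of_forall_mem measurableSet_uIoc ?_
      intro z hz
      exact (hconst (Set.uIoc_subset_uIcc hz)).symm
    have hsplit := intervalIntegral.integral_add_adjacent_intervals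
      (intInt_aux hk0.le le_rfl) hint2
    have h2 : (∫ z in k..s, 1 / Real.sqrt (Tk k z)) = (s - k) * (1 / Real.sqrt k) := by
      rw [intervalIntegral.integral_congr hconst, intervalIntegral.integral_const,
        smul_eq_mul]
    rw [hk, hTks, ← hsplit, int_aux hk0.le le_rfl, h2]
    have h3 : 0 ≤ (s - k) * (1 / Real.sqrt k) :=
      mul_nonneg (sub_nonneg.mpr h) (by positivity)
    linarith
end

section
/- There exists a constant C > 0 such that for every real k > 1 and every real s ≥ 0, both √(T_k(s)) ≤ C·(1 + √|g_k(s)|) and √(T_k(s)) ≤ C·h_k(s) hold. -/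
open Real intervalIntegral

lemma Tk_of_mem {k z : ℝ} (h0 : 0 ≤ z) (hzk : z ≤ k) : Tk k z = z := by
  simp [Tk, min_eq_right hzk, max_eq_right h0]

lemma Tk_of_ge {k z : ℝ} (h0 : 0 ≤ k) (hzk : k ≤ z) : Tk k z = k := by
  simp [Tk, min_eq_left hzk, max_eq_right h0]

lemma phi_eq {k y : ℝ} (hk : 1 ≤ k) (hy : 0 < y) (hyk : y ≤ k) :
    (∫ z in (1:ℝ)..y, 1 / Tk k z) = Real.log y := by
  have h1 : ∀ z ∈ Set.uIcc (1:ℝ) y, 0 < z ∧ z ≤ k := by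
    intro z hz
    rw [Set.uIcc_eq_union] at hz
    rcases hz with hz | hz
    · exact ⟨lt_of_lt_of_le one_pos hz.1, hz.2.trans hyk⟩
    · exact ⟨lt_of_lt_of_le hy hz.1, hz.2.trans hk⟩
  rw [integral_congr (g := fun z => 1 / z)
      (fun z hz => by rw [Tk_of_mem (h1 z hz).1.le (h1 z hz).2]),
    integral_one_div (fun h => lt_irrefl 0 (h1 0 h).1), div_one]

lemma log_bound {x : ℝ} (hx : 0 < x) : -Real.log x ≤ 2 * x ^ (-(1/2) : ℝ) := by
  have hs : 0 < Real.sqrt x := Real.sqrt_pos.2 hx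
  have h1 : Real.log (Real.sqrt x)⁻¹ ≤ (Real.sqrt x)⁻¹ - 1 :=
    Real.log_le_sub_one_of_pos (inv_pos.2 hs)
  have h2 : Real.log x = 2 * Real.log (Real.sqrt x) := (Real.log_sqrt hx.le).symm ▸ by ring
  have h3 : x ^ (-(1/2) : ℝ) = (Real.sqrt x)⁻¹ := by
    rw [Real.rpow_neg hx.le, Real.sqrt_eq_rpow]
  rw [Real.log_inv] at h1
  rw [h2, h3]
  nlinarith [inv_pos.2 hs]

lemma logint : IntervalIntegrable Real.log MeasureTheory.volume 0 1 := by
  have h2 : IntervalIntegrable (fun x : ℝ => 2 * x ^ (-(1/2) : ℝ)) MeasureTheory.volume 0 1 :=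
    (intervalIntegrable_rpow' (by norm_num)).const_mul 2
  apply h2.mono_fun Real.measurable_log.aestronglyMeasurable
  filter_upwards [MeasureTheory.ae_restrict_mem measurableSet_uIoc] with x hx
  rw [Set.uIoc_of_le zero_le_one] at hx
  have h0 : Real.log x ≤ 0 := Real.log_nonpos hx.1.le hx.2
  have hp : (0:ℝ) ≤ 2 * x ^ (-(1/2) : ℝ) :=
    mul_nonneg (by norm_num) (Real.rpow_nonneg hx.1.le _)
  simp only [Real.norm_eq_abs]
  rw [abs_of_nonpos h0, abs_of_nonneg hp]
  exact log_bound hx.1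

lemma int_log_lb : (-4 : ℝ) ≤ ∫ x in (0:ℝ)..1, Real.log x := by
  have hr : IntervalIntegrable (fun x : ℝ => -(2 * x ^ (-(1/2) : ℝ))) MeasureTheory.volume 0 1 :=
    ((intervalIntegrable_rpow' (by norm_num)).const_mul 2).neg
  have hmono : (∫ x in (0:ℝ)..1, -(2 * x ^ (-(1/2) : ℝ))) ≤ ∫ x in (0:ℝ)..1, Real.log x := by
    apply integral_mono_on zero_le_one hr logint
    intro x hx
    rcases eq_or_lt_of_le hx.1 with h | h
    · simp [← h, Real.zero_rpow (by norm_num : (-(1/2):ℝ) ≠ 0)]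
    · linarith [log_bound h]
  have hval : (∫ x in (0:ℝ)..1, -(2 * x ^ (-(1/2) : ℝ))) = -4 := by
    rw [intervalIntegral.integral_neg, intervalIntegral.integral_const_mul,
      integral_rpow (Or.inl (by norm_num))]
    norm_num
  linarith

lemma ii_congr {f g : ℝ → ℝ} {a b : ℝ} (hg : IntervalIntegrable g MeasureTheory.volume a b)
    (h : Set.EqOn f g (Set.uIcc a b)) : IntervalIntegrable f MeasureTheory.volume a b := by
  refine hg.congr ?_
  intro x hx
  exact (h (Set.uIoc_subset_uIcc hx)).symm

theorem stmt_5 :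
    ∃ C : ℝ, 0 < C ∧ ∀ k : ℝ, 1 < k → ∀ s : ℝ, 0 ≤ s →
      Real.sqrt (Tk k s) ≤ C * (1 + Real.sqrt |gk k s|) ∧
      Real.sqrt (Tk k s) ≤ C * hk k s := by
  refine ⟨Real.exp 2, Real.exp_pos 2, fun k hk1 s hs => ?_⟩
  have hC1 : (1:ℝ) ≤ Real.exp 2 := Real.one_le_exp (by norm_num)
  set m : ℝ := min k s with hmdef
  have hm0 : 0 ≤ m := le_min (by linarith) hs
  have hms : m ≤ s := min_le_right _ _
  have hmk : m ≤ k := min_le_left _ _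
  have hTks : Tk k s = m := by
    simp only [Tk, hmdef, max_eq_right hm0]
    exact max_eq_right hm0
  -- Part 2 : h_k(s) ≥ 2 √m
  have hfcongr : Set.EqOn (fun z => 1 / Real.sqrt (Tk k z)) (fun z => z ^ (-(1/2) : ℝ))
      (Set.uIcc 0 m) := by
    intro z hz
    rw [Set.uIcc_of_le hm0] at hz
    show 1 / Real.sqrt (Tk k z) = z ^ (-(1/2) : ℝ)
    rcases eq_or_lt_of_le hz.1 with h | h
    · rw [← h, Tk_of_mem le_rfl (by linarith), Real.zero_rpow (by norm_num : (-(1/2):ℝ) ≠ 0)]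
      simp
    · rw [Tk_of_mem h.le (hz.2.trans hmk), Real.rpow_neg h.le, Real.sqrt_eq_rpow, one_div]
  have int1 : IntervalIntegrable (fun z => 1 / Real.sqrt (Tk k z)) MeasureTheory.volume 0 m :=
    ii_congr (intervalIntegrable_rpow' (by norm_num : (-1:ℝ) < -(1/2))) hfcongr
  have i1 : (∫ z in (0:ℝ)..m, 1 / Real.sqrt (Tk k z)) = 2 * Real.sqrt m := by
    rw [integral_congr hfcongr, integral_rpow (Or.inl (by norm_num))]
    rw [Real.zero_rpow (by norm_num : (-(1/2)+1 : ℝ) ≠ 0), Real.sqrt_eq_rpow]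
    norm_num
    ring_nf
  have int2 : IntervalIntegrable (fun z => 1 / Real.sqrt (Tk k z)) MeasureTheory.volume m s ∧
      0 ≤ ∫ z in m..s, 1 / Real.sqrt (Tk k z) := by
    rcases le_total s k with h | h
    · have hm : m = s := min_eq_right h
      rw [hm]
      exact ⟨IntervalIntegrable.refl, by rw [integral_same]⟩
    · have hm : m = k := min_eq_left h
      have hge : Set.EqOn (fun z => 1 / Real.sqrt (Tk k z))
          (fun _ => 1 / Real.sqrt k) (Set.uIcc m s) := by
        intro z hz
        rw [hm, Set.uIcc_of_le h] at hz
        show 1 / Real.sqrt (Tk k z) = 1 / Real.sqrt k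
        rw [Tk_of_ge (by linarith) hz.1]
      refine ⟨ii_congr intervalIntegrable_const hge, ?_⟩
      rw [integral_congr hge, integral_const, smul_eq_mul]
      have : (0:ℝ) ≤ 1 / Real.sqrt k := by positivity
      have : (0:ℝ) ≤ s - m := by linarith
      positivity
  have hsplit : hk k s = (∫ z in (0:ℝ)..m, 1 / Real.sqrt (Tk k z)) +
      ∫ z in m..s, 1 / Real.sqrt (Tk k z) :=
    (integral_add_adjacent_intervals int1 int2.1).symm
  have h2key : Real.sqrt (Tk k s) ≤ hk k s := by
    rw [hTks, hsplit, i1]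
    nlinarith [Real.sqrt_nonneg m, int2.2]
  have hhk0 : 0 ≤ hk k s := le_trans (Real.sqrt_nonneg _) h2key
  constructor
  · -- Part 1
    rcases le_or_gt m (Real.exp 3) with hcase | hcase
    · have hsmall : Real.sqrt (Tk k s) ≤ Real.exp 2 := by
        rw [hTks]
        calc Real.sqrt m ≤ Real.sqrt (Real.exp 3) := Real.sqrt_le_sqrt hcase
        _ ≤ Real.sqrt (Real.exp 2 ^ 2) := by
            apply Real.sqrt_le_sqrt
            rw [sq, ← Real.exp_add]
            exact Real.exp_le_exp.2 (by norm_num)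
        _ = Real.exp 2 := Real.sqrt_sq (Real.exp_pos 2).le
      have : (0:ℝ) ≤ Real.sqrt |gk k s| := Real.sqrt_nonneg _
      nlinarith [Real.exp_pos 2]
    · -- big case : g_k(s) ≥ m
      have hm1 : 1 < m := lt_trans (by nlinarith [Real.add_one_le_exp (3:ℝ)]) hcase
      have hk1' : (1:ℝ) ≤ k := hk1.le
      -- piece on [0,1]
      have I01 : IntervalIntegrable (fun y => ∫ z in (1:ℝ)..y, 1 / Tk k z)
          MeasureTheory.volume 0 1 := by
        rw [intervalIntegrable_iff_integrableOn_Ioc_of_le zero_le_one]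
        have hl := logint
        rw [intervalIntegrable_iff_integrableOn_Ioc_of_le zero_le_one] at hl
        exact hl.congr_fun
          (fun y hy => (phi_eq hk1' hy.1 (hy.2.trans hk1')).symm) measurableSet_Ioc
      have J01 : (-4:ℝ) ≤ ∫ y in (0:ℝ)..1, ∫ z in (1:ℝ)..y, 1 / Tk k z := by
        have := integral_congr_ae (μ := MeasureTheory.volume) (a := (0:ℝ)) (b := 1)
          (f := fun y => ∫ z in (1:ℝ)..y, 1 / Tk k z) (g := Real.log)
          (Filter.Eventually.of_forall (fun y hy => by
            rw [Set.uIoc_of_le zero_le_one] at hy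
            exact phi_eq hk1' hy.1 (hy.2.trans hk1')))
        rw [this]
        exact int_log_lb
      -- piece on [1,m]
      have hEq1m : Set.EqOn (fun y => ∫ z in (1:ℝ)..y, 1 / Tk k z) Real.log
          (Set.uIcc 1 m) := by
        intro y hy
        rw [Set.uIcc_of_le hm1.le] at hy
        exact phi_eq hk1' (lt_of_lt_of_le one_pos hy.1) (hy.2.trans hmk)
      have I1m : IntervalIntegrable (fun y => ∫ z in (1:ℝ)..y, 1 / Tk k z)
          MeasureTheory.volume 1 m :=
        ii_congr (intervalIntegrable_log (by
          rw [Set.uIcc_of_le hm1.le]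
          intro h; exact absurd h.1 (by norm_num))) hEq1m
      have J1m : (∫ y in (1:ℝ)..m, ∫ z in (1:ℝ)..y, 1 / Tk k z)
          = m * Real.log m - m + 1 := by
        rw [integral_congr hEq1m, integral_log]
        simp
      -- piece on [m,s]
      have Ims : IntervalIntegrable (fun y => ∫ z in (1:ℝ)..y, 1 / Tk k z)
          MeasureTheory.volume m s ∧
          0 ≤ ∫ y in m..s, ∫ z in (1:ℝ)..y, 1 / Tk k z := by
        rcases le_total s k with h | h
        · have hm : m = s := min_eq_right h
          rw [hm]
          exact ⟨IntervalIntegrable.refl, by rw [integral_same]⟩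
        · have hm : m = k := min_eq_left h
          have hEqms : Set.EqOn (fun y => ∫ z in (1:ℝ)..y, 1 / Tk k z)
              (fun y => Real.log k + (y - k) * (1 / k)) (Set.uIcc m s) := by
            intro y hy
            rw [hm, Set.uIcc_of_le h] at hy
            have intA : IntervalIntegrable (fun z => 1 / Tk k z) MeasureTheory.volume 1 k := by
              have hbase : IntervalIntegrable (fun z : ℝ => 1 / z) MeasureTheory.volume 1 k := by
                apply ContinuousOn.intervalIntegrable
                apply ContinuousOn.div continuousOn_const continuousOn_id
                intro z hz
                rw [Set.uIcc_of_le hk1'] at hz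
                have : (0:ℝ) < z := by linarith [hz.1]
                exact this.ne'
              refine ii_congr hbase (fun z hz => ?_)
              rw [Set.uIcc_of_le hk1'] at hz
              show 1 / Tk k z = 1 / z
              rw [Tk_of_mem (by linarith [hz.1]) hz.2]
            have intB : IntervalIntegrable (fun z => 1 / Tk k z) MeasureTheory.volume k y := by
              refine ii_congr (intervalIntegrable_const (c := 1 / k))
                (fun z hz => ?_)
              rw [Set.uIcc_of_le hy.1] at hz
              show 1 / Tk k z = 1 / k
              rw [Tk_of_ge (by linarith) hz.1]
            have hsp : (∫ z in (1:ℝ)..y, 1 / Tk k z)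
                = (∫ z in (1:ℝ)..k, 1 / Tk k z) + ∫ z in k..y, 1 / Tk k z :=
              (integral_add_adjacent_intervals intA intB).symm
            have hA : (∫ z in (1:ℝ)..k, 1 / Tk k z) = Real.log k :=
              phi_eq hk1' (by linarith) le_rfl
            have hB : (∫ z in k..y, 1 / Tk k z) = (y - k) * (1 / k) := by
              rw [integral_congr (g := fun _ => 1 / k) (fun z hz => by
                rw [Set.uIcc_of_le hy.1] at hz
                show 1 / Tk k z = 1 / k
                rw [Tk_of_ge (by linarith) hz.1]), integral_const, smul_eq_mul]
            show (∫ z in (1:ℝ)..y, 1 / Tk k z) = Real.log k + (y - k) * (1 / k)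
            rw [hsp, hA, hB]
          have hcont : IntervalIntegrable (fun y => Real.log k + (y - k) * (1 / k))
              MeasureTheory.volume m s := by
            apply Continuous.intervalIntegrable
            fun_prop
          refine ⟨ii_congr hcont hEqms, ?_⟩
          rw [integral_congr hEqms]
          apply integral_nonneg (by rw [hm]; exact h)
          intro y hy
          rw [hm] at hy
          have hlk : 0 ≤ Real.log k := Real.log_nonneg hk1'
          have : 0 ≤ (y - k) * (1 / k) := by
            apply mul_nonneg (by linarith [hy.1]) (by positivity)
          linarith
      -- combine
      have hg : gk k s = (∫ y in (0:ℝ)..1, ∫ z in (1:ℝ)..y, 1 / Tk k z)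
          + (∫ y in (1:ℝ)..m, ∫ z in (1:ℝ)..y, 1 / Tk k z)
          + ∫ y in m..s, ∫ z in (1:ℝ)..y, 1 / Tk k z := by
        rw [integral_add_adjacent_intervals I01 I1m,
          integral_add_adjacent_intervals (I01.trans I1m) Ims.1]
        rfl
      have hlogm : (3:ℝ) < Real.log m := (Real.lt_log_iff_exp_lt (by linarith)).2 hcase
      have hgm : m ≤ gk k s := by
        rw [hg, J1m]
        nlinarith [J01, Ims.2, Real.add_one_le_exp (3:ℝ),
          mul_le_mul_of_nonneg_left hlogm.le hm0]
      have habs : m ≤ |gk k s| := hgm.trans (le_abs_self _)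
      have hsq : Real.sqrt m ≤ Real.sqrt |gk k s| := Real.sqrt_le_sqrt habs
      rw [hTks]
      nlinarith [Real.sqrt_nonneg m, Real.sqrt_nonneg |gk k s|, Real.exp_pos 2]
  · calc Real.sqrt (Tk k s) ≤ hk k s := h2key
    _ ≤ Real.exp 2 * hk k s := le_mul_of_one_le_left hhk0 hC1
end

section
/- For every ξ > 0 and every y ≥ 0, the convex conjugate satisfies g_ξ*(y) ≤ ξ · (log(1 + y/ξ))² / (1 + log(1 + y/ξ)) · (1 + y/ξ). Equivalently, for every x > 0: x·y − ξ·x·(exp x − 1) ≤ ξ · (log(1 + y/ξ))² / (1 + log(1 + y/ξ)) · (1 + y/ξ). -/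
open Real

lemma key_ineq (L x : ℝ) (hL : 0 ≤ L) (hx : 0 < x) :
    x * Real.exp L - x * Real.exp x ≤ L ^ 2 / (1 + L) * Real.exp L := by
  have h1L : (0:ℝ) < 1 + L := by linarith
  set a : ℝ := L ^ 2 / (1 + L) with ha
  -- exp L / (1+L) ≤ exp a
  have hea : Real.exp L / (1 + L) ≤ Real.exp a := by
    have hp := Real.exp_pos (L / (1 + L))
    have hs : Real.exp (L / (1 + L)) ≤ 1 + L := by
      have h1 := Real.add_one_le_exp (-(L / (1 + L)))
      rw [Real.exp_neg] at h1
      have h2 : (1:ℝ) - L / (1 + L) = 1 / (1 + L) := by field_simp; ring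
      have h4 := mul_le_mul_of_nonneg_left h1 hp.le
      rw [mul_inv_cancel₀ (ne_of_gt hp)] at h4
      have e : -(L / (1 + L)) + 1 = 1 / (1 + L) := by linarith
      rw [e, mul_one_div, div_le_one h1L] at h4
      exact h4
    have h3 : a = L - L / (1 + L) := by
      rw [ha, eq_sub_iff_add_eq, ← add_div, div_eq_iff (ne_of_gt h1L)]
      ring
    rw [h3, Real.exp_sub]
    gcongr
  -- tangent line: x * exp x ≥ x * (exp L / (1+L)) * (1 + x - a)
  have htan : x * (Real.exp L / (1 + L)) * (1 + x - a) ≤ x * Real.exp x := by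
    rcases le_or_gt 0 (1 + x - a) with h | h
    · have t1 : (1 + (x - a)) * Real.exp a ≤ Real.exp x := by
        have := Real.add_one_le_exp (x - a)
        calc (1 + (x - a)) * Real.exp a ≤ Real.exp (x - a) * Real.exp a := by
              nlinarith [Real.exp_pos a]
          _ = Real.exp x := by rw [← Real.exp_add]; ring_nf
      have t2 : x * (Real.exp L / (1 + L)) * (1 + x - a)
          ≤ x * ((1 + (x - a)) * Real.exp a) := by
        have := mul_le_mul_of_nonneg_right hea h
        nlinarith [hx.le]
      nlinarith [hx.le, t1, t2]
    · have : x * (Real.exp L / (1 + L)) * (1 + x - a) ≤ 0 := by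
        have hpos : 0 < x * (Real.exp L / (1 + L)) := by positivity
        nlinarith
      nlinarith [Real.exp_pos x, hx.le]
  -- quadratic inequality
  have hquad : x * L - x ^ 2 + a * x ≤ L ^ 2 := by
    rw [ha]
    rw [div_mul_eq_mul_div, ← sub_nonneg]
    have : L ^ 2 - (x * L - x ^ 2 + L ^ 2 * x / (1 + L)) =
        ((1 + L) * x ^ 2 - L * (1 + 2 * L) * x + L ^ 2 * (1 + L)) / (1 + L) := by
      field_simp
      ring
    rw [this]
    apply div_nonneg _ h1L.le
    nlinarith [sq_nonneg (2 * (1 + L) * x - L * (1 + 2 * L)), hL]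
  have := mul_le_mul_of_nonneg_left hquad (le_of_lt (div_pos (Real.exp_pos L) h1L))
  calc x * Real.exp L - x * Real.exp x
      ≤ x * Real.exp L - x * (Real.exp L / (1 + L)) * (1 + x - a) := by linarith
    _ = Real.exp L / (1 + L) * (x * L - x ^ 2 + a * x) := by field_simp; ring
    _ ≤ Real.exp L / (1 + L) * L ^ 2 := this
    _ = L ^ 2 / (1 + L) * Real.exp L := by ring

theorem stmt_7 (ξ : ℝ) (hξ : 0 < ξ) (y : ℝ) (hy : 0 ≤ y) :
    sSup {v : ℝ | ∃ x : ℝ, 0 < x ∧ v = x * y - ξ * x * (Real.exp x - 1)} ≤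
      ξ * (Real.log (1 + y / ξ)) ^ 2 / (1 + Real.log (1 + y / ξ)) * (1 + y / ξ) ∧
    ∀ x : ℝ, 0 < x →
      x * y - ξ * x * (Real.exp x - 1) ≤
        ξ * (Real.log (1 + y / ξ)) ^ 2 / (1 + Real.log (1 + y / ξ)) * (1 + y / ξ) := by
  set L : ℝ := Real.log (1 + y / ξ) with hLdef
  have ht : 0 ≤ y / ξ := div_nonneg hy hξ.le
  have h1t : (0:ℝ) < 1 + y / ξ := by linarith
  have hL : 0 ≤ L := Real.log_nonneg (by linarith)
  have h1L : (0:ℝ) < 1 + L := by linarith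
  have hexp : Real.exp L = 1 + y / ξ := Real.exp_log h1t
  have hpt : ∀ x : ℝ, 0 < x →
      x * y - ξ * x * (Real.exp x - 1) ≤ ξ * L ^ 2 / (1 + L) * (1 + y / ξ) := by
    intro x hx
    have h := key_ineq L x hL hx
    have h2 := mul_le_mul_of_nonneg_left h hξ.le
    have heq : x * y - ξ * x * (Real.exp x - 1) =
        ξ * (x * Real.exp L - x * Real.exp x) := by
      rw [hexp]
      field_simp
      ring
    have heq2 : ξ * (L ^ 2 / (1 + L) * Real.exp L) =
        ξ * L ^ 2 / (1 + L) * (1 + y / ξ) := by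
      rw [hexp]; ring
    linarith [heq ▸ heq2 ▸ h2]
  refine ⟨?_, hpt⟩
  apply Real.sSup_le
  · rintro v ⟨x, hx, rfl⟩
    exact hpt x hx
  · have : 0 ≤ ξ * L ^ 2 / (1 + L) := by positivity
    positivity
end

section
/- There exist constants C > 0 and t₀ > 1 such that for all t ≥ t₀ one has Φ(g*(t)) ≤ C · t · log t, where Φ(u) = u·√(log u) and g*(t) = sup_{s>0} (s·t − exp(s²/4)). -/
open Real

/-- Convex conjugate of `s ↦ exp(s²/4)` on `(0, ∞)`. -/
noncomputable def gstar (t : ℝ) : ℝ :=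
  sSup {v : ℝ | ∃ s : ℝ, 0 < s ∧ v = s * t - Real.exp (s ^ 2 / 4)}

/-- `Φ(u) = u·√(log u)`. -/
noncomputable def Phi (u : ℝ) : ℝ := u * Real.sqrt (Real.log u)

lemma log_ge_one {t : ℝ} (ht : 16 ≤ t) : 1 ≤ Real.log t := by
  rw [show (1:ℝ) = Real.log (Real.exp 1) by simp]
  apply Real.log_le_log (Real.exp_pos 1)
  nlinarith [Real.exp_one_lt_d9]

lemma elem_bound {t s : ℝ} (ht : 16 ≤ t) (hs : 0 < s) :
    s * t - Real.exp (s ^ 2 / 4) ≤ 2 * t * Real.sqrt (Real.log t) := by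
  have ht0 : (0:ℝ) < t := by linarith
  set L := Real.log t with hL
  have hL1 : 1 ≤ L := log_ge_one ht
  set r := Real.sqrt L with hr
  have hr1 : 1 ≤ r := by
    rw [hr, show (1:ℝ) = Real.sqrt 1 by simp]
    exact Real.sqrt_le_sqrt hL1
  have hrr : r * r = L := Real.mul_self_sqrt (by linarith)
  have hr0 : 0 < r := by linarith
  have hlogr : 0 ≤ Real.log r := Real.log_nonneg hr1
  set a := L - Real.log r with ha
  have hexpa : Real.exp a * r = t := by
    rw [ha, Real.exp_sub, Real.exp_log hr0, hL, Real.exp_log ht0]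
    field_simp
  have hE : 0 < Real.exp a := Real.exp_pos a
  have htan : Real.exp a * (s ^ 2 / 4 - a + 1) ≤ Real.exp (s ^ 2 / 4) := by
    have h := Real.add_one_le_exp (s ^ 2 / 4 - a)
    calc Real.exp a * (s ^ 2 / 4 - a + 1) ≤ Real.exp a * Real.exp (s ^ 2 / 4 - a) := by
          exact mul_le_mul_of_nonneg_left h hE.le
      _ = Real.exp (s ^ 2 / 4) := by rw [← Real.exp_add]; ring_nf
  nlinarith [mul_nonneg hE.le (sq_nonneg (s / 2 - r)),
    mul_nonneg hE.le hlogr, hE.le, hrr, hexpa, htan]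

lemma gstar_le {t : ℝ} (ht : 16 ≤ t) : gstar t ≤ 2 * t * Real.sqrt (Real.log t) := by
  apply Real.sSup_le
  · rintro v ⟨s, hs, rfl⟩
    exact elem_bound ht hs
  · have : (0:ℝ) ≤ Real.sqrt (Real.log t) := Real.sqrt_nonneg _
    nlinarith

lemma one_le_gstar {t : ℝ} (ht : 16 ≤ t) : 1 ≤ gstar t := by
  have hmem : (1 * t - Real.exp (1 ^ 2 / 4)) ∈
      {v : ℝ | ∃ s : ℝ, 0 < s ∧ v = s * t - Real.exp (s ^ 2 / 4)} :=
    ⟨1, one_pos, rfl⟩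
  have hbdd : BddAbove {v : ℝ | ∃ s : ℝ, 0 < s ∧ v = s * t - Real.exp (s ^ 2 / 4)} := by
    refine ⟨2 * t * Real.sqrt (Real.log t), ?_⟩
    rintro v ⟨s, hs, rfl⟩
    exact elem_bound ht hs
  have h := le_csSup hbdd hmem
  have he : Real.exp ((1:ℝ) ^ 2 / 4) ≤ Real.exp 1 := by
    apply Real.exp_le_exp.2; norm_num
  have : Real.exp 1 < 2.7182818286 := Real.exp_one_lt_d9
  unfold gstar
  nlinarith

theorem stmt_8 :
    ∃ C : ℝ, 0 < C ∧ ∃ t₀ : ℝ, 1 < t₀ ∧ ∀ t : ℝ, t₀ ≤ t →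
      Phi (gstar t) ≤ C * t * Real.log t := by
  refine ⟨3, by norm_num, 16, by norm_num, fun t ht => ?_⟩
  have ht0 : (0:ℝ) < t := by linarith
  set L := Real.log t with hL
  have hL1 : 1 ≤ L := log_ge_one ht
  set r := Real.sqrt L with hr
  have hr1 : 1 ≤ r := by
    rw [hr, show (1:ℝ) = Real.sqrt 1 by simp]
    exact Real.sqrt_le_sqrt hL1
  have hrr : r * r = L := Real.mul_self_sqrt (by linarith)
  set u := gstar t with hu
  have hu1 : 1 ≤ u := one_le_gstar ht
  have hub : u ≤ 2 * t * r := gstar_le ht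
  -- 2 * t * r ≤ t ^ 2
  have hLt : L < t := by
    have := Real.log_lt_sub_one_of_pos ht0 (by linarith)
    linarith
  have hrt : r ≤ Real.sqrt t := Real.sqrt_le_sqrt hLt.le
  have hst : Real.sqrt t * Real.sqrt t = t := Real.mul_self_sqrt ht0.le
  have h4 : (4:ℝ) ≤ Real.sqrt t := by
    rw [show (4:ℝ) = Real.sqrt 16 by
      rw [show (16:ℝ) = 4 ^ 2 by norm_num, Real.sqrt_sq]; norm_num]
    exact Real.sqrt_le_sqrt ht
  have h2r : 2 * t * r ≤ t ^ 2 := by nlinarith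
  have hlogu : Real.log u ≤ 2 * L := by
    calc Real.log u ≤ Real.log (2 * t * r) := Real.log_le_log (by linarith) hub
      _ ≤ Real.log (t ^ 2) := Real.log_le_log (by nlinarith) h2r
      _ = 2 * L := by rw [Real.log_pow]; push_cast; ring
  have hsq : Real.sqrt (Real.log u) ≤ Real.sqrt 2 * r := by
    calc Real.sqrt (Real.log u) ≤ Real.sqrt (2 * L) := Real.sqrt_le_sqrt hlogu
      _ = Real.sqrt 2 * r := by rw [Real.sqrt_mul (by norm_num)]
  have hsqrt2 : Real.sqrt 2 ≤ 1.5 := by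
    rw [show (1.5:ℝ) = Real.sqrt (1.5 ^ 2) by rw [Real.sqrt_sq]; norm_num]
    apply Real.sqrt_le_sqrt; norm_num
  have hsqnn : 0 ≤ Real.sqrt (Real.log u) := Real.sqrt_nonneg _
  have hr0 : 0 < r := by linarith
  calc Phi u = u * Real.sqrt (Real.log u) := rfl
    _ ≤ (2 * t * r) * (Real.sqrt 2 * r) := by
        apply mul_le_mul hub hsq hsqnn (by nlinarith)
    _ = 2 * Real.sqrt 2 * t * L := by rw [← hrr]; ring
    _ ≤ 3 * t * L := by nlinarith [mul_nonneg ht0.le (show (0:ℝ) ≤ L by linarith)]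
end

section
/- For every ξ > 0 and all reals γ₀, γ₁ with 0 < γ₀ ≤ γ₁, there exists a constant C > 0 (depending on ξ, γ₀, γ₁) such that for every D ≥ 0 and every D₀ with γ₀ ≤ D₀ ≤ γ₁: (log(1 + |D − D₀|/ξ))² / (1 + log(1 + |D − D₀|/ξ)) · (1 + |D − D₀|/ξ) ≤ C · (D·log(D/D₀) − D + D₀), where D·log(D/D₀) is interpreted as 0 when D = 0 (consistent with Lean's conventions for Real.log and multiplication). -/
open Real

lemma log_ge_one_sub_inv {x : ℝ} (hx : 0 < x) : 1 - 1/x ≤ Real.log x := by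
  have h := Real.log_le_sub_one_of_pos (show (0:ℝ) < 1/x by positivity)
  rw [Real.log_div one_ne_zero (ne_of_gt hx), Real.log_one] at h
  linarith

lemma entropy_ge (D D₀ : ℝ) (hD : 0 ≤ D) (hD₀ : 0 < D₀) :
    (Real.sqrt D - Real.sqrt D₀)^2 ≤ D * Real.log (D / D₀) - D + D₀ := by
  rcases eq_or_lt_of_le hD with h0 | h0
  · rw [← h0]
    simp [Real.sq_sqrt (le_of_lt hD₀)]
  · have hx : 0 < D / D₀ := by positivity
    have hlog : 1 - Real.sqrt (D₀/D) ≤ Real.log (Real.sqrt (D/D₀)) := by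
      have h := log_ge_one_sub_inv (show 0 < Real.sqrt (D/D₀) by positivity)
      have hinv : 1 / Real.sqrt (D/D₀) = Real.sqrt (D₀/D) := by
        rw [one_div, ← Real.sqrt_inv]
        congr 1
        field_simp
      rw [hinv] at h
      exact h
    rw [Real.log_sqrt (le_of_lt hx)] at hlog
    have hmul : D * (2 * (1 - Real.sqrt (D₀/D))) ≤ D * Real.log (D/D₀) := by
      have := mul_le_mul_of_nonneg_left
        (show 2*(1 - Real.sqrt (D₀/D)) ≤ Real.log (D/D₀) by linarith) hD
      linarith
    have hDs : D * Real.sqrt (D₀/D) = Real.sqrt D * Real.sqrt D₀ := by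
      rw [show Real.sqrt D * Real.sqrt D₀ = Real.sqrt (D * D₀) from (Real.sqrt_mul hD D₀).symm]
      rw [show D * Real.sqrt (D₀/D) = Real.sqrt (D^2) * Real.sqrt (D₀/D) by
        rw [Real.sqrt_sq hD]]
      rw [← Real.sqrt_mul (sq_nonneg D)]
      congr 1
      field_simp
    have hsq : (Real.sqrt D - Real.sqrt D₀)^2 = D + D₀ - 2*(Real.sqrt D * Real.sqrt D₀) := by
      have h1 : Real.sqrt D ^ 2 = D := Real.sq_sqrt hD
      have h2 : Real.sqrt D₀ ^ 2 = D₀ := Real.sq_sqrt (le_of_lt hD₀)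
      nlinarith [h1, h2]
    nlinarith [hmul, hDs, hsq]

set_option maxHeartbeats 1000000 in
theorem stmt_13 (ξ γ₀ γ₁ : ℝ) (hξ : 0 < ξ) (hγ₀ : 0 < γ₀) (hγ : γ₀ ≤ γ₁) :
    ∃ C : ℝ, 0 < C ∧ ∀ D : ℝ, 0 ≤ D → ∀ D₀ : ℝ, γ₀ ≤ D₀ → D₀ ≤ γ₁ →
      (Real.log (1 + |D - D₀| / ξ)) ^ 2 / (1 + Real.log (1 + |D - D₀| / ξ)) *
          (1 + |D - D₀| / ξ) ≤
        C * (D * Real.log (D / D₀) - D + D₀) := by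
  have hγ₁ : 0 < γ₁ := lt_of_lt_of_le hγ₀ hγ
  set a : ℝ := γ₀ * ξ / (γ₀ + ξ) with ha_def
  have ha : 0 < a := by positivity
  have haγ₀ : a ≤ γ₀ := by
    rw [ha_def, div_le_iff₀ (by positivity)]
    nlinarith
  set K : ℝ := Real.log (γ₁ / a) with hK_def
  have hK : 0 ≤ K := Real.log_nonneg (by rw [le_div_iff₀ ha]; linarith)
  set C'' : ℝ := 4 + 40 * γ₁^2 / ξ^2 with hC''_def
  set C₁ : ℝ := 4 * (2*γ₁ + ξ) / ξ^2 with hC₁_def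
  set C₂ : ℝ := (1 + γ₁/ξ)^2 * (4*γ₁ / ξ^2) with hC₂_def
  set C₃ : ℝ := (1 + (1+K) * C'') / a with hC₃_def
  have hC'' : 0 < C'' := by rw [hC''_def]; positivity
  have hC₁ : 0 < C₁ := by rw [hC₁_def]; positivity
  have hC₂ : 0 < C₂ := by rw [hC₂_def]; positivity
  have hC₃ : 0 < C₃ := by
    rw [hC₃_def]
    have h1 : 0 < (1+K) * C'' := by positivity
    have : 0 < 1 + (1+K) * C'' := by linarith
    positivity
  clear_value a K C'' C₁ C₂ C₃
  refine ⟨C₁ + C₂ + C₃, by positivity, ?_⟩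
  intro D hD D₀ h₀ h₁
  have hD₀ : 0 < D₀ := lt_of_lt_of_le hγ₀ h₀
  set s := Real.sqrt D with hs_def
  set s₀ := Real.sqrt D₀ with hs₀_def
  have hs : 0 ≤ s := Real.sqrt_nonneg D
  have hs0 : 0 ≤ s₀ := Real.sqrt_nonneg D₀
  have hsD : s^2 = D := Real.sq_sqrt hD
  have hsD₀ : s₀^2 = D₀ := Real.sq_sqrt hD₀.le
  set φ := D * Real.log (D / D₀) - D + D₀ with hφ_def
  have hφ : (s - s₀)^2 ≤ φ := entropy_ge D D₀ hD hD₀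
  have hφ0 : 0 ≤ φ := le_trans (sq_nonneg _) hφ
  set t := |D - D₀| / ξ with ht_def
  have ht : 0 ≤ t := by rw [ht_def]; positivity
  set L := Real.log (1 + t) with hL_def
  have hL : 0 ≤ L := Real.log_nonneg (by linarith)
  have hLt : L ≤ t := by
    have := Real.log_le_sub_one_of_pos (show (0:ℝ) < 1 + t by linarith)
    rw [hL_def]; linarith
  have h1L : (0:ℝ) < 1 + L := by linarith
  clear_value s s₀ φ t L
  have hid : (D - D₀)^2 = (s - s₀)^2 * (s + s₀)^2 := by
    rw [← hsD, ← hsD₀]; ring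
  have ht2 : t^2 = (D - D₀)^2 / ξ^2 := by
    rw [ht_def, div_pow, sq_abs]
  have hC₂φ : 0 ≤ C₂ * φ := mul_nonneg hC₂.le hφ0
  have hC₃φ : 0 ≤ C₃ * φ := mul_nonneg hC₃.le hφ0
  have hC₁φ : 0 ≤ C₁ * φ := mul_nonneg hC₁.le hφ0
  by_cases hcase : t ≤ 1
  · -- Case 1 : small deviation
    have habs : |D - D₀| ≤ ξ := by
      rw [ht_def, div_le_one hξ] at hcase; exact hcase
    have hDle : D ≤ D₀ + ξ := by
      have := abs_le.1 habs; linarith [this.2]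
    have e1 : L^2/(1+L) ≤ L^2 := div_le_self (sq_nonneg L) (by linarith)
    have e2 : L^2/(1+L) * (1+t) ≤ L^2 * (1+t) :=
      mul_le_mul_of_nonneg_right e1 (by linarith)
    have e3 : L^2 * (1+t) ≤ t^2 * 2 := by
      have hL2 : L^2 ≤ t^2 := pow_le_pow_left₀ hL hLt 2
      have ha1 : L^2 * (1+t) ≤ t^2 * (1+t) := mul_le_mul_of_nonneg_right hL2 (by linarith)
      have ha2 : t^2 * (1+t) ≤ t^2 * 2 :=
        mul_le_mul_of_nonneg_left (by linarith) (sq_nonneg t)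
      linarith
    have hsum : (s + s₀)^2 ≤ 2*(2*γ₁ + ξ) := by
      have hexp : (s + s₀)^2 = s^2 + 2*(s*s₀) + s₀^2 := by ring
      linarith [two_mul_le_add_sq s s₀]
    have hnum : 2*(D - D₀)^2 ≤ 4*(2*γ₁ + ξ) * φ := by
      have h1 := mul_le_mul_of_nonneg_left hsum (sq_nonneg (s - s₀))
      have h2 := mul_le_mul_of_nonneg_left hφ (show (0:ℝ) ≤ 4*(2*γ₁+ξ) by positivity)
      linarith [hid, h1, h2]
    have e4 : t^2 * 2 ≤ C₁ * φ := by
      have h5 : (2*(D-D₀)^2) / ξ^2 ≤ (4*(2*γ₁+ξ)*φ) / ξ^2 :=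
        div_le_div_of_nonneg_right hnum (by positivity)
      have h6 : C₁ * φ = (4*(2*γ₁+ξ)*φ) / ξ^2 := by rw [hC₁_def]; ring
      have h7 : t^2 * 2 = (2*(D-D₀)^2) / ξ^2 := by rw [ht2]; ring
      linarith
    have main : L^2/(1+L) * (1+t) ≤ C₁ * φ := by linarith
    have hring : (C₁ + C₂ + C₃) * φ = C₁*φ + C₂*φ + C₃*φ := by ring
    linarith [hC₂φ, hC₃φ]
  · push_neg at hcase
    have ht1 : 1 ≤ t := hcase.le
    have hLle : L^2/(1+L) ≤ L := by
      rw [div_le_iff₀ h1L]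
      have : L * (1+L) = L + L^2 := by ring
      linarith
    by_cases hDD : D ≤ D₀
    · -- Case 2 : D below D₀, deviation at least ξ, but bounded
      have habs : |D - D₀| = D₀ - D := by
        rw [abs_of_nonpos (by linarith)]; ring
      have hξle : ξ ≤ D₀ - D := by
        rw [ht_def, habs, le_div_iff₀ hξ] at ht1; linarith
      have htle : t ≤ γ₁/ξ := by
        rw [ht_def, habs]
        exact div_le_div_of_nonneg_right (by linarith) hξ.le
      have e2 : L^2/(1+L) * (1+t) ≤ (1+t)*(1+t) :=
        mul_le_mul (by linarith) le_rfl (by linarith) (by linarith)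
      have e3 : (1+t)*(1+t) ≤ (1+γ₁/ξ)^2 := by
        have h1 : (1+t)*(1+t) ≤ (1+γ₁/ξ)*(1+γ₁/ξ) :=
          mul_le_mul (by linarith) (by linarith) (by linarith) (by linarith)
        have h2 : (1+γ₁/ξ)*(1+γ₁/ξ) = (1+γ₁/ξ)^2 := by ring
        linarith
      have hsum : (s + s₀)^2 ≤ 4*γ₁ := by
        have hexp : (s + s₀)^2 = s^2 + 2*(s*s₀) + s₀^2 := by ring
        linarith [two_mul_le_add_sq s s₀]
      have hξ2 : ξ^2 ≤ (D - D₀)^2 := by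
        have h1 : ξ^2 ≤ (D₀ - D)^2 := pow_le_pow_left₀ hξ.le hξle 2
        have h2 : (D₀ - D)^2 = (D - D₀)^2 := by ring
        linarith
      have hφlb : ξ^2 ≤ 4*γ₁*φ := by
        have h1 := mul_le_mul_of_nonneg_left hsum (sq_nonneg (s - s₀))
        have h2 := mul_le_mul_of_nonneg_left hφ (show (0:ℝ) ≤ 4*γ₁ by positivity)
        linarith [hid, h1, h2]
      have e4 : (1+γ₁/ξ)^2 ≤ C₂ * φ := by
        have h1 : 1 ≤ 4*γ₁*φ/ξ^2 := (one_le_div (by positivity)).2 (by linarith)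
        have h2 := mul_le_mul_of_nonneg_left h1 (sq_nonneg (1+γ₁/ξ))
        have h3 : C₂ * φ = (1+γ₁/ξ)^2 * (4*γ₁*φ/ξ^2) := by rw [hC₂_def]; ring
        linarith
      have main : L^2/(1+L) * (1+t) ≤ C₂ * φ := by linarith
      have hring : (C₁ + C₂ + C₃) * φ = C₁*φ + C₂*φ + C₃*φ := by ring
      linarith [hC₁φ, hC₃φ]
    · -- Case 3 : D above D₀ by at least ξ
      push_neg at hDD
      have hDpos : 0 < D := lt_trans hD₀ hDD
      have habs : |D - D₀| = D - D₀ := abs_of_nonneg (by linarith)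
      have hξle : ξ ≤ D - D₀ := by
        rw [ht_def, habs, le_div_iff₀ hξ] at ht1; linarith
      have e2 : L^2/(1+L) * (1+t) ≤ L * (1+t) :=
        mul_le_mul_of_nonneg_right hLle (by linarith)
      have hDa : 1 + t ≤ D / a := by
        rw [ht_def, habs]
        have hsplit : D / a = D/γ₀ + D/ξ := by rw [ha_def]; field_simp; ring
        rw [hsplit]
        have h1 : 1 ≤ D/γ₀ := (one_le_div hγ₀).2 (by linarith)
        have h2 : (D - D₀)/ξ ≤ D/ξ := div_le_div_of_nonneg_right (by linarith) hξ.le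
        linarith
      have hloga : L ≤ Real.log (D/a) := by
        rw [hL_def]
        exact Real.log_le_log (by linarith) hDa
      have e3 : L * (1+t) ≤ Real.log (D/a) * (D/a) :=
        mul_le_mul hloga hDa (by linarith) (le_trans hL hloga)
      have hsplitlog : Real.log (D/a) = Real.log (D/D₀) + Real.log (D₀/a) := by
        rw [Real.log_div (ne_of_gt hDpos) (ne_of_gt ha),
            Real.log_div (ne_of_gt hDpos) (ne_of_gt hD₀),
            Real.log_div (ne_of_gt hD₀) (ne_of_gt ha)]
        ring
      have hlog0a : Real.log (D₀/a) ≤ K := by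
        rw [hK_def]
        exact Real.log_le_log (by positivity) (div_le_div_of_nonneg_right h₁ ha.le)
      -- D ≤ C'' * φ
      have hDC : D ≤ C'' * φ := by
        by_cases hbig : 4*γ₁ ≤ D
        · have h2s : 2*s₀ ≤ s := by
            have h := Real.sqrt_le_sqrt (show 4*D₀ ≤ D by linarith)
            rw [show (4:ℝ)*D₀ = 2^2*D₀ by norm_num, Real.sqrt_mul (by positivity),
              Real.sqrt_sq (by norm_num : (0:ℝ) ≤ 2)] at h
            rw [hs_def, hs₀_def]; exact h
          have h4φ : D ≤ 4*φ := by
            have hp : 0 ≤ (s - 2*s₀)*(3*s - 2*s₀) :=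
              mul_nonneg (by linarith) (by linarith)
            have hexp : (s - 2*s₀)*(3*s - 2*s₀) = 3*s^2 - 8*(s*s₀) + 4*s₀^2 := by ring
            have hexp2 : (s - s₀)^2 = s^2 - 2*(s*s₀) + s₀^2 := by ring
            linarith [hφ]
          have h9 : 0 ≤ 40*γ₁^2/ξ^2 * φ := by positivity
          have h10 : C''*φ = 4*φ + 40*γ₁^2/ξ^2 * φ := by rw [hC''_def]; ring
          linarith
        · push_neg at hbig
          have hsum : (s + s₀)^2 ≤ 10*γ₁ := by
            have hexp : (s + s₀)^2 = s^2 + 2*(s*s₀) + s₀^2 := by ring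
            linarith [two_mul_le_add_sq s s₀]
          have hξ2 : ξ^2 ≤ (D - D₀)^2 := pow_le_pow_left₀ hξ.le hξle 2
          have hφlb : ξ^2 ≤ 10*γ₁*φ := by
            have h1 := mul_le_mul_of_nonneg_left hsum (sq_nonneg (s - s₀))
            have h2 := mul_le_mul_of_nonneg_left hφ (show (0:ℝ) ≤ 10*γ₁ by positivity)
            linarith [hid, h1, h2]
          have h1 : 4*γ₁ ≤ 40*γ₁^2*φ/ξ^2 := by
            rw [le_div_iff₀ (by positivity)]
            have := mul_le_mul_of_nonneg_left hφlb (show (0:ℝ) ≤ 4*γ₁ by positivity)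
            linarith
          have h2 : C'' * φ = 4*φ + 40*γ₁^2*φ/ξ^2 := by rw [hC''_def]; ring
          linarith [hφ0, h1, h2]
      have hDlog : D * Real.log (D/D₀) = φ + D - D₀ := by rw [hφ_def]; ring
      have hnum1 : D * Real.log (D₀/a) ≤ D * K := mul_le_mul_of_nonneg_left hlog0a hD
      have e4 : Real.log (D/a) * (D/a) = (D * Real.log (D/D₀) + D * Real.log (D₀/a)) / a := by
        rw [hsplitlog]; ring
      have hnum : D * Real.log (D/D₀) + D * Real.log (D₀/a) ≤ (1 + (1+K)*C'') * φ := by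
        have hh1 : D * Real.log (D/D₀) ≤ φ + D := by rw [hDlog]; linarith
        have hh2 : (1+K)*D ≤ (1+K)*(C''*φ) :=
          mul_le_mul_of_nonneg_left hDC (by linarith)
        have hring : (1 + (1+K)*C'') * φ = φ + (1+K)*(C''*φ) := by ring
        have hexp : (1+K)*D = D + K*D := by ring
        linarith [hnum1, hh1, hh2]
      have e5 : Real.log (D/a) * (D/a) ≤ C₃ * φ := by
        rw [e4]
        have hh1 : (D * Real.log (D/D₀) + D * Real.log (D₀/a)) / a ≤ ((1 + (1+K)*C'') * φ) / a :=
          div_le_div_of_nonneg_right hnum ha.le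
        have hh2 : C₃ * φ = ((1 + (1+K)*C'') * φ) / a := by rw [hC₃_def]; ring
        linarith
      have main : L^2/(1+L) * (1+t) ≤ C₃ * φ := by linarith
      have hring : (C₁ + C₂ + C₃) * φ = C₁*φ + C₂*φ + C₃*φ := by ring
      linarith [hC₁φ, hC₂φ]
end

section
/- Let c_n > 0, c_p > 0, M ≥ 0, and let a, b be reals with |b| ≤ M. Then (c_n·(exp a − exp b) − c_p·(exp(−a) − exp(−b)))·(a − b) ≥ min(c_n, c_p)·exp(−M)·|a − b|·(exp(|a − b|) − 1). -/
open Real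

theorem stmt_16 (c_n c_p M a b : ℝ) (hcn : 0 < c_n) (hcp : 0 < c_p)
    (hM : 0 ≤ M) (hb : |b| ≤ M) :
    (c_n * (Real.exp a - Real.exp b) - c_p * (Real.exp (-a) - Real.exp (-b))) * (a - b) ≥
      min c_n c_p * Real.exp (-M) * |a - b| * (Real.exp |a - b| - 1) := by
  obtain ⟨hb1, hb2⟩ := abs_le.mp hb
  have key : (c_n * (Real.exp a - Real.exp b) - c_p * (Real.exp (-a) - Real.exp (-b))) * (a - b)
      = (c_n * Real.exp b + c_p * Real.exp (-a)) * ((Real.exp (a - b) - 1) * (a - b)) := by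
    have h1 : Real.exp a = Real.exp b * Real.exp (a - b) := by
      rw [← Real.exp_add]; ring_nf
    have h2 : Real.exp (-b) = Real.exp (-a) * Real.exp (a - b) := by
      rw [← Real.exp_add]; ring_nf
    rw [h1, h2]; ring
  rw [key]
  have hm : min c_n c_p * Real.exp (-M) > 0 := by positivity
  rcases le_total b a with h | h
  · rw [abs_of_nonneg (by linarith : (0:ℝ) ≤ a - b)]
    have h1 : Real.exp (-M) ≤ Real.exp b := Real.exp_le_exp.mpr (by linarith)
    have h2 : min c_n c_p ≤ c_n := min_le_left _ _
    have h3 : (0:ℝ) ≤ (Real.exp (a - b) - 1) * (a - b) := by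
      have := Real.one_le_exp (by linarith : (0:ℝ) ≤ a - b)
      nlinarith
    have h4 : min c_n c_p * Real.exp (-M) ≤ c_n * Real.exp b + c_p * Real.exp (-a) := by
      have := Real.exp_pos (-a)
      nlinarith [Real.exp_pos (-M), lt_min hcn hcp]
    nlinarith
  · rw [abs_of_nonpos (by linarith : a - b ≤ 0)]
    have heq : (Real.exp (a - b) - 1) * (a - b)
        = Real.exp (a - b) * ((Real.exp (-(a - b)) - 1) * (b - a)) := by
      have : Real.exp (a - b) * Real.exp (-(a - b)) = 1 := by
        rw [← Real.exp_add]; simp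
      nlinarith
    rw [heq]
    have h1 : Real.exp (-M) ≤ Real.exp (-b) := Real.exp_le_exp.mpr (by linarith)
    have h2 : min c_n c_p ≤ c_p := min_le_right _ _
    have h3 : (0:ℝ) ≤ (Real.exp (-(a - b)) - 1) * (b - a) := by
      have := Real.one_le_exp (by linarith : (0:ℝ) ≤ -(a - b))
      nlinarith
    -- (c_n e^b + c_p e^{-a}) e^{a-b} ≥ c_p e^{-a} e^{a-b} = c_p e^{-b} ≥ m e^{-M}
    have h5 : Real.exp (-a) * Real.exp (a - b) = Real.exp (-b) := by
      rw [← Real.exp_add]; ring_nf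
    have h4 : min c_n c_p * Real.exp (-M) ≤ (c_n * Real.exp b + c_p * Real.exp (-a)) * Real.exp (a - b) := by
      have hcpb : min c_n c_p * Real.exp (-M) ≤ c_p * Real.exp (-b) := by
        nlinarith [Real.exp_pos (-M), Real.exp_pos (-b), lt_min hcn hcp]
      nlinarith [mul_pos hcn (mul_pos (Real.exp_pos b) (Real.exp_pos (a - b)))]
    nlinarith
end
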